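/- Let $F(x)=\psi(|x|)$ be the rotationally invariant function from the counterexample (with $\psi(r)=(1-r)^2$ for $r\ge 1/2$). Then $F$ is a Łojasiewicz function: at the origin the Łojasiewicz inequality holds with exponent $\theta=1/2$ on some neighbourhood (since the Hessian at $0$ equals $-6\,\mathrm{Id}$ and has full rank), and for every $x$ with $|x|=1$ there exist $\varepsilon\in(0,1/2]$ and $L>0$ with $|\nabla F(y)|\ge L|F(y)-F(x)|^{1/2}$ for all $y$ with $1-\varepsilon<|y|<1+\varepsilon$. -/

import Mathlib

noncomputable def ψ : ℝ → ℝ := fun r =>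
  if (1/2 : ℝ) ≤ r then (1 - r)^2 else (8/3) * r^3 - 3 * r^2 + 2/3

noncomputable def Fcounter : EuclideanSpace ℝ (Fin 2) → ℝ := fun x => ψ ‖x‖

open InnerProductSpace Real

lemma grad_helper (y : EuclideanSpace ℝ (Fin 2)) (φ : ℝ → ℝ) (d : ℝ)
    (hφ : HasDerivAt φ d (‖y‖^2))
    (heq : ∀ᶠ z in nhds y, Fcounter z = φ (‖z‖^2)) :
    HasGradientAt Fcounter ((2*d) • y) y := by
  have h1 : HasFDerivAt (fun z : EuclideanSpace ℝ (Fin 2) => ‖z‖^2)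
      (2 • innerSL ℝ y) y := by
    simpa using (hasFDerivAt_id y).norm_sq
  have h2 := hφ.comp_hasFDerivAt y h1
  have h3 : HasFDerivAt Fcounter (d • (2 • innerSL ℝ y)) y :=
    h2.congr_of_eventuallyEq heq
  rw [hasGradientAt_iff_hasFDerivAt]
  refine h3.congr_fderiv ?_
  ext v
  simp [real_inner_smul_left]
  rw [← mul_assoc, mul_comm d 2]

lemma gradA (y : EuclideanSpace ℝ (Fin 2)) (h0 : 0 < ‖y‖) (h1 : ‖y‖ < 1/2) :
    HasGradientAt Fcounter ((8*‖y‖-6) • y) y := by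
  have hr : (0:ℝ) ≤ ‖y‖ := norm_nonneg y
  have hs : Real.sqrt (‖y‖^2) = ‖y‖ := Real.sqrt_sq hr
  have key := grad_helper y (fun s => (8/3) * (Real.sqrt s)^3 - 3 * s + 2/3) (4*‖y‖-3)
  have hd : HasDerivAt (fun s => (8/3) * (Real.sqrt s)^3 - 3 * s + 2/3) (4*‖y‖-3) (‖y‖^2) := by
    have hne : (‖y‖^2 : ℝ) ≠ 0 := by positivity
    have h := Real.hasDerivAt_sqrt hne
    have h2 := (((h.pow 3).const_mul ((8:ℝ)/3)).sub
      ((hasDerivAt_id (‖y‖^2)).const_mul 3)).add_const (2/3)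
    refine h2.congr_deriv ?_
    push_cast
    rw [hs]
    field_simp
    ring
  have he : ∀ᶠ z in nhds y, Fcounter z = (8/3) * (Real.sqrt (‖z‖^2))^3 - 3 * ‖z‖^2 + 2/3 := by
    have : IsOpen {z : EuclideanSpace ℝ (Fin 2) | ‖z‖ < 1/2} :=
      isOpen_lt continuous_norm continuous_const
    filter_upwards [this.mem_nhds h1] with z hz
    rw [Fcounter, ψ, if_neg (by linarith), Real.sqrt_sq (norm_nonneg z)]
  have := key hd he
  convert this using 2
  ring

lemma gradB (y : EuclideanSpace ℝ (Fin 2)) (h1 : 1/2 < ‖y‖) :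
    HasGradientAt Fcounter ((2*(‖y‖-1)/‖y‖) • y) y := by
  have hr : (0:ℝ) < ‖y‖ := by linarith
  have hs : Real.sqrt (‖y‖^2) = ‖y‖ := Real.sqrt_sq hr.le
  have key := grad_helper y (fun s => (1 - Real.sqrt s)^2) ((‖y‖-1)/‖y‖)
  have hd : HasDerivAt (fun s => (1 - Real.sqrt s)^2) ((‖y‖-1)/‖y‖) (‖y‖^2) := by
    have hne : (‖y‖^2 : ℝ) ≠ 0 := by positivity
    have h := Real.hasDerivAt_sqrt hne
    have h2 := ((hasDerivAt_const (‖y‖^2) (1:ℝ)).sub h).pow 2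
    refine h2.congr_deriv ?_
    simp only [Pi.sub_apply]
    rw [hs]
    field_simp
    ring
  have he : ∀ᶠ z in nhds y, Fcounter z = (1 - Real.sqrt (‖z‖^2))^2 := by
    have : IsOpen {z : EuclideanSpace ℝ (Fin 2) | 1/2 < ‖z‖} :=
      isOpen_lt continuous_const continuous_norm
    filter_upwards [this.mem_nhds h1] with z hz
    rw [Fcounter, ψ, if_pos hz.le, Real.sqrt_sq (norm_nonneg z)]
  have := key hd he
  convert this using 2
  field_simp

theorem Fcounter_lojasiewicz :
    (∃ (L : ℝ), 0 < L ∧ ∃ U ∈ nhds (0 : EuclideanSpace ℝ (Fin 2)),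
      ∀ y ∈ U, L * |Fcounter y - Fcounter 0| ^ ((1:ℝ)/2) ≤ ‖gradient Fcounter y‖) ∧
    (∀ x : EuclideanSpace ℝ (Fin 2), ‖x‖ = 1 →
      ∃ ε : ℝ, 0 < ε ∧ ε ≤ 1/2 ∧ ∃ L : ℝ, 0 < L ∧
        ∀ y : EuclideanSpace ℝ (Fin 2), 1 - ε < ‖y‖ → ‖y‖ < 1 + ε →
          L * |Fcounter y - Fcounter x| ^ ((1:ℝ)/2) ≤ ‖gradient Fcounter y‖) := by
  constructor
  · refine ⟨1, one_pos, Metric.ball 0 (1/2), Metric.ball_mem_nhds _ (by norm_num), ?_⟩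
    intro y hy
    rw [Metric.mem_ball, dist_zero_right] at hy
    have hF0 : Fcounter 0 = 2/3 := by
      simp [Fcounter, ψ]
    rcases eq_or_ne y 0 with rfl | hne
    · rw [sub_self, abs_zero, Real.zero_rpow (by norm_num), mul_zero]
      exact norm_nonneg _
    · have h0 : 0 < ‖y‖ := norm_pos_iff.mpr hne
      rw [(gradA y h0 hy).gradient]
      have hFy : Fcounter y = (8/3)*‖y‖^3 - 3*‖y‖^2 + 2/3 := by
        rw [Fcounter, ψ, if_neg (by linarith)]
      set r := ‖y‖ with hr
      rw [norm_smul, Real.norm_eq_abs, hFy, hF0]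
      have habs : |8*r-6| = 6-8*r := by rw [abs_of_nonpos (by linarith)]; ring
      have habs2 : |8/3*r^3 - 3*r^2 + 2/3 - 2/3| = 3*r^2 - 8/3*r^3 := by
        rw [abs_of_nonpos (by nlinarith)]; ring
      rw [habs, habs2, ← Real.sqrt_eq_rpow, one_mul]
      rw [show (6-8*r)*r = Real.sqrt (((6-8*r)*r)^2) from (Real.sqrt_sq (by nlinarith)).symm]
      exact Real.sqrt_le_sqrt (by nlinarith)
  · intro x hx
    refine ⟨1/2, by norm_num, le_refl _, 2, by norm_num, ?_⟩
    intro y hy1 hy2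
    have h1 : 1/2 < ‖y‖ := by linarith
    have h0 : 0 < ‖y‖ := by linarith
    have hFx : Fcounter x = 0 := by rw [Fcounter, hx, ψ]; norm_num
    rw [(gradB y h1).gradient]
    have hFy : Fcounter y = (1-‖y‖)^2 := by rw [Fcounter, ψ, if_pos h1.le]
    rw [norm_smul, Real.norm_eq_abs, hFy, hFx, sub_zero, abs_of_nonneg (sq_nonneg _),
      ← Real.sqrt_eq_rpow, Real.sqrt_sq_eq_abs, abs_div, abs_of_pos h0,
      div_mul_cancel₀ _ h0.ne', abs_mul, abs_two, abs_sub_comm]
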